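/- arXiv:1912.03274 — 4 statements merged into one kernel-verified Lean document; each statement's English description precedes it below -/
import Mathlib

section
/- Let Γ₁ and Γ₂ be groups and M a trivial (Γ₁ × Γ₂)-module. Let z ∈ Z²(Γ₁ × Γ₂, M) be a homogeneous 2-cocycle (in inhomogeneous form) satisfying z((γ₁,1),(1,γ₂)) = 0 and z((1,γ₂),(γ₁,1)) = 0 for all γ₁ ∈ Γ₁ and γ₂ ∈ Γ₂. Then z((γ₁,γ₂),(γ₁′,γ₂′)) = z((γ₁,1),(γ₁′,1)) + z((1,γ₂),(1,γ₂′)) for all γ₁,γ₁′ ∈ Γ₁ and γ₂,γ₂′ ∈ Γ₂. -/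
/-- Let `Γ₁, Γ₂` be groups and `M` a trivial `(Γ₁ × Γ₂)`-module (an additive commutative
group with trivial action).  If `z` is an inhomogeneous 2-cocycle on `Γ₁ × Γ₂` with values
in `M` satisfying `z((γ₁,1),(1,γ₂)) = 0` and `z((1,γ₂),(γ₁,1)) = 0` for all `γ₁, γ₂`, then
`z((γ₁,γ₂),(γ₁',γ₂')) = z((γ₁,1),(γ₁',1)) + z((1,γ₂),(1,γ₂'))`. -/
theorem cocycle_on_product_decomposes
    (Γ₁ Γ₂ : Type) [Group Γ₁] [Group Γ₂]
    (M : Type) [AddCommGroup M]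
    (z : (Γ₁ × Γ₂) → (Γ₁ × Γ₂) → M)
    (hcocycle : ∀ g h k : Γ₁ × Γ₂, z g h + z (g * h) k = z h k + z g (h * k))
    (h1 : ∀ (γ₁ : Γ₁) (γ₂ : Γ₂), z (γ₁, 1) (1, γ₂) = 0)
    (h2 : ∀ (γ₁ : Γ₁) (γ₂ : Γ₂), z (1, γ₂) (γ₁, 1) = 0) :
    ∀ (γ₁ γ₁' : Γ₁) (γ₂ γ₂' : Γ₂),
      z (γ₁, γ₂) (γ₁', γ₂') = z (γ₁, 1) (γ₁', 1) + z (1, γ₂) (1, γ₂') := by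
  intro γ₁ γ₁' γ₂ γ₂'
  have A := hcocycle (γ₁, 1) (1, γ₂) (γ₁', γ₂')
  have B := hcocycle (γ₁', 1) (1, γ₂) (1, γ₂')
  have C := hcocycle (γ₁, 1) (γ₁', 1) (1, γ₂ * γ₂')
  have D := hcocycle (1, γ₂) (γ₁', 1) (1, γ₂')
  simp only [Prod.mk_mul_mk, mul_one, one_mul, h1, h2, zero_add, add_zero] at A B C D
  rw [A, ← B, D, C]
  abel
end

section
/- Let B be a group, A a normal subgroup with B/A abelian, and let π, π′ be finite-dimensional irreducible complex representations of B, each with semisimple restriction to A, such that Hom_A(π,π′) ≠ 0. Then there exists a character χ of B/A (viewed as a character of B trivial on A) with π′ ≅ χ ⊗ π. -/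
open Module

section RepDefs

variable {G : Type} [Group G] {V : Type} [AddCommGroup V] [Module ℂ V]

/-- A submodule is a subrepresentation if it is stable under the group action. -/
def IsSubrep (ρ : Representation ℂ G V) (W : Submodule ℂ V) : Prop :=
  ∀ g : G, W.map (ρ g) ≤ W

/-- A representation is irreducible if the space is nonzero and the only invariant
submodules are `⊥` and `⊤`. -/
def IsIrred (ρ : Representation ℂ G V) : Prop :=
  Nontrivial V ∧ ∀ W : Submodule ℂ V, IsSubrep ρ W → W = ⊥ ∨ W = ⊤

/-- A representation is semisimple if every subrepresentation admits an invariant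
complement (equivalently, the space is the sum of its irreducible subrepresentations). -/
def IsSemisimpleRep (ρ : Representation ℂ G V) : Prop :=
  ∀ W : Submodule ℂ V, IsSubrep ρ W → ∃ W' : Submodule ℂ V, IsSubrep ρ W' ∧ IsCompl W W'

/-- The representation on an invariant submodule. -/
def subrep (ρ : Representation ℂ G V) (W : Submodule ℂ V) (hW : IsSubrep ρ W) :
    Representation ℂ G W where
  toFun g := (ρ g).restrict (fun x hx => hW g ⟨x, hx, rfl⟩)
  map_one' := by ext x; simp [LinearMap.restrict_apply]
  map_mul' g₁ g₂ := by ext x; simp [LinearMap.restrict_apply]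

/-- The space of `G`-equivariant linear maps from `σ` to `ρ`, as a complex subspace. -/
def equivHoms (ρ : Representation ℂ G V) {W : Type} [AddCommGroup W] [Module ℂ W]
    (σ : Representation ℂ G W) : Submodule ℂ (W →ₗ[ℂ] V) where
  carrier := {φ | ∀ (g : G) (w : W), φ (σ g w) = ρ g (φ w)}
  add_mem' := by
    intro f₁ f₂ h₁ h₂ g w
    simp only [LinearMap.add_apply, map_add, h₁ g w, h₂ g w]
  zero_mem' := by intro g w; simp
  smul_mem' := by
    intro c f hf g w
    simp only [LinearMap.smul_apply, map_smul, hf g w]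

/-- Two invariant submodules are isomorphic as subrepresentations if there is an
equivariant linear isomorphism between them. -/
def SubrepIso (ρ : Representation ℂ G V) (W₁ W₂ : Submodule ℂ V)
    (hW₁ : IsSubrep ρ W₁) : Prop :=
  ∃ e : W₁ ≃ₗ[ℂ] W₂,
    ∀ (g : G) (w : W₁), ((e ⟨ρ g w, hW₁ g ⟨w, w.2, rfl⟩⟩ : W₂) : V) = ρ g (e w)

end RepDefs

/-- Let `B` be a group, `A` a normal subgroup with `B/A` abelian, and `π, π′`
finite-dimensional irreducible complex representations of `B` with semisimple
restrictions to `A`.  If `Hom_A(π, π′) ≠ 0` then `π′ ≅ χ ⊗ π` for some character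
`χ` of `B/A`, i.e. a character of `B` trivial on `A`. -/
theorem twist_by_character_of_quotient
    {B : Type} [Group B] (A : Subgroup B) [A.Normal]
    (habQuot : ∀ b₁ b₂ : B, b₁ * b₂ * b₁⁻¹ * b₂⁻¹ ∈ A)
    {V V' : Type} [AddCommGroup V] [Module ℂ V] [FiniteDimensional ℂ V]
    [AddCommGroup V'] [Module ℂ V'] [FiniteDimensional ℂ V']
    (π : Representation ℂ B V) (π' : Representation ℂ B V')
    (hirr : IsIrred π) (hirr' : IsIrred π')
    (hss : IsSemisimpleRep (π.comp A.subtype))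
    (hss' : IsSemisimpleRep (π'.comp A.subtype))
    (hhom : ∃ φ : V →ₗ[ℂ] V', φ ≠ 0 ∧ ∀ (a : A) (v : V), φ (π a v) = π' a (φ v)) :
    ∃ χ : B →* ℂˣ, (∀ a ∈ A, χ a = 1) ∧
      ∃ e : V ≃ₗ[ℂ] V', ∀ (b : B) (v : V), e ((χ b : ℂ) • π b v) = π' b (e v) := by
  classical
  obtain ⟨φs, hφsne, hφseq⟩ := hhom
  -- The twisted action of `B` on `V →ₗ[ℂ] V'`
  let T : B → ((V →ₗ[ℂ] V') →ₗ[ℂ] (V →ₗ[ℂ] V')) := fun b =>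
    { toFun := fun φ => π' b ∘ₗ φ ∘ₗ π b⁻¹
      map_add' := fun φ ψ => by ext v; simp
      map_smul' := fun c φ => by ext v; simp }
  have hTapp : ∀ (b : B) (φ : V →ₗ[ℂ] V') (v : V), T b φ v = π' b (φ (π b⁻¹ v)) :=
    fun _ _ _ => rfl
  have hTmul : ∀ (b₁ b₂ : B) (φ : V →ₗ[ℂ] V'), T b₁ (T b₂ φ) = T (b₁ * b₂) φ := by
    intro b₁ b₂ φ; ext v
    simp only [hTapp, map_mul, mul_inv_rev, Module.End.mul_apply]
  -- The condition of being `A`-equivariant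
  set P : (V →ₗ[ℂ] V') → Prop := fun φ => ∀ (a : A) (v : V), φ (π a v) = π' a (φ v)
    with hPdef
  have hPs : P φs := hφseq
  -- `A` acts trivially on equivariant maps
  have hTA : ∀ c ∈ A, ∀ φ, P φ → T c φ = φ := by
    intro c hc φ hφ; ext v
    have h1 := hφ ⟨c⁻¹, inv_mem hc⟩ v
    simp only [Subgroup.coe_mk] at h1 ⊢
    rw [hTapp]
    have : φ (π c⁻¹ v) = π' c⁻¹ (φ v) := h1
    rw [this, ← Module.End.mul_apply, ← map_mul, mul_inv_cancel, map_one,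
      Module.End.one_apply]
  -- `T b` preserves equivariance
  have hTP : ∀ (b : B) (φ : V →ₗ[ℂ] V'), P φ → P (T b φ) := by
    intro b φ hφ a v
    have hmem : b⁻¹ * (a : B) * b ∈ A := by
      have := Subgroup.Normal.conj_mem ‹A.Normal› (a : B) a.2 b⁻¹
      simpa using this
    have hgrp : (b⁻¹ : B) * (a : B) = (b⁻¹ * a * b) * b⁻¹ := by group
    have h1 : π b⁻¹ (π (a : B) v) = π (b⁻¹ * a * b) (π b⁻¹ v) := by
      rw [← Module.End.mul_apply, ← Module.End.mul_apply, ← map_mul, ← map_mul]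
      simp only [mul_assoc, mul_inv_cancel, mul_one]
    have h2 : φ (π (b⁻¹ * (a : B) * b) (π b⁻¹ v))
        = π' (b⁻¹ * (a : B) * b) (φ (π b⁻¹ v)) := hφ ⟨b⁻¹ * a * b, hmem⟩ (π b⁻¹ v)
    have hgrp2 : b * (b⁻¹ * (a : B) * b) = (a : B) * b := by group
    calc T b φ (π (a : B) v) = π' b (φ (π b⁻¹ (π (a : B) v))) := rfl
      _ = π' b (π' (b⁻¹ * (a : B) * b) (φ (π b⁻¹ v))) := by rw [h1, h2]
      _ = π' ((a : B) * b) (φ (π b⁻¹ v)) := by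
          rw [← Module.End.mul_apply, ← map_mul, hgrp2]
      _ = π' (a : B) (T b φ v) := by
          rw [map_mul, Module.End.mul_apply]; rfl
  -- the `T b` commute on equivariant maps
  have hcomm : ∀ (b₁ b₂ : B) (φ : V →ₗ[ℂ] V'), P φ →
      T b₁ (T b₂ φ) = T b₂ (T b₁ φ) := by
    intro b₁ b₂ φ hφ
    have hc : b₁ * b₂ = (b₁ * b₂ * b₁⁻¹ * b₂⁻¹) * (b₂ * b₁) := by group
    rw [hTmul, hTmul, hc, ← hTmul,
      hTA _ (habQuot b₁ b₂) _ (hTP (b₂ * b₁) φ hφ)]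
  -- The submodule of `A`-equivariant maps
  set H : Submodule ℂ (V →ₗ[ℂ] V') := equivHoms (π'.comp A.subtype) (π.comp A.subtype)
    with hHdef
  have hHmem : ∀ φ : V →ₗ[ℂ] V', φ ∈ H ↔ P φ := fun φ => Iff.rfl
  -- the family of nonzero invariant submodules of equivariant maps
  set S𝒮 : Set (Submodule ℂ (V →ₗ[ℂ] V')) :=
    {S | S ≠ ⊥ ∧ S ≤ H ∧ ∀ (b : B), ∀ φ ∈ S, T b φ ∈ S} with h𝒮def
  have hH𝒮 : H ∈ S𝒮 := by
    refine ⟨?_, le_refl _, ?_⟩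
    · rw [Submodule.ne_bot_iff]
      exact ⟨φs, (hHmem φs).mpr hPs, hφsne⟩
    · intro b φ hφ
      exact (hHmem _).mpr (hTP b φ ((hHmem φ).mp hφ))
  -- pick an invariant submodule of minimal dimension
  have hEx : ∃ n : ℕ, ∃ S ∈ S𝒮, finrank ℂ S = n := ⟨_, H, hH𝒮, rfl⟩
  set n := Nat.find hEx with hn
  obtain ⟨S, hS𝒮, hSrank⟩ := Nat.find_spec hEx
  -- each `T b` acts by a scalar on `S`
  have key : ∀ b : B, ∃ μ : ℂ, ∀ φ ∈ S, T b φ = μ • φ := by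
    intro b
    haveI : Nontrivial S := Submodule.nontrivial_iff_ne_bot.mpr hS𝒮.1
    have hres : ∀ x ∈ S, T b x ∈ S := hS𝒮.2.2 b
    set f : Module.End ℂ S := (T b).restrict hres with hf
    obtain ⟨μ, hμ⟩ := Module.End.exists_eigenvalue f
    obtain ⟨w, hw⟩ := hμ.exists_hasEigenvector
    set E : Submodule ℂ (V →ₗ[ℂ] V') :=
      S ⊓ LinearMap.ker (T b - μ • LinearMap.id) with hEdef
    have hmemE : ∀ φ, φ ∈ E ↔ (φ ∈ S ∧ T b φ = μ • φ) := by
      intro φ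
      constructor
      · rintro ⟨h1, h2⟩
        refine ⟨h1, ?_⟩
        have := (LinearMap.mem_ker).mp h2
        have h3 : T b φ - μ • φ = 0 := this
        rw [sub_eq_zero] at h3; exact h3
      · rintro ⟨h1, h2⟩
        refine ⟨h1, LinearMap.mem_ker.mpr ?_⟩
        show T b φ - μ • φ = 0
        rw [h2, sub_self]
    have hwE : (w : V →ₗ[ℂ] V') ∈ E := by
      rw [hmemE]
      refine ⟨w.2, ?_⟩
      have h1 : (↑(f w) : V →ₗ[ℂ] V') = T b ↑w := (T b).restrict_coe_apply hres w
      have h2 : f w = μ • w := hw.apply_eq_smul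
      rw [h2] at h1
      rw [← h1]; rfl
    have hE𝒮 : E ∈ S𝒮 := by
      refine ⟨?_, le_trans inf_le_left hS𝒮.2.1, ?_⟩
      · rw [Submodule.ne_bot_iff]
        refine ⟨w, hwE, ?_⟩
        simpa using hw.2
      · intro b' φ hφ
        rw [hmemE] at hφ ⊢
        refine ⟨hS𝒮.2.2 b' φ hφ.1, ?_⟩
        have hPφ : P φ := (hHmem φ).mp (hS𝒮.2.1 hφ.1)
        rw [hcomm b b' φ hPφ, hφ.2, map_smul]
    have hle : n ≤ finrank ℂ E := Nat.find_le ⟨E, hE𝒮, rfl⟩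
    have hES : E ≤ S := inf_le_left
    have hSE : S = E := by
      symm
      exact Submodule.eq_of_le_of_finrank_le hES (by rw [hSrank]; exact hle)
    refine ⟨μ, fun φ hφ => ?_⟩
    rw [hSE] at hφ
    exact ((hmemE φ).mp hφ).2
  -- pick a nonzero element of S
  obtain ⟨φ₀, hφ₀S, hφ₀ne⟩ := (Submodule.ne_bot_iff S).mp hS𝒮.1
  have hPφ₀ : P φ₀ := (hHmem φ₀).mp (hS𝒮.2.1 hφ₀S)
  -- define the character values
  set lam : B → ℂ := fun b => (key b).choose with hlamdef
  have hlam : ∀ (b : B), ∀ φ ∈ S, T b φ = lam b • φ := fun b => (key b).choose_spec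
  have hcancel : ∀ μ ν : ℂ, μ • φ₀ = ν • φ₀ → μ = ν := by
    intro μ ν h
    have h2 : (μ - ν) • φ₀ = 0 := by rw [sub_smul, h, sub_self]
    rcases smul_eq_zero.mp h2 with h3 | h3
    · exact sub_eq_zero.mp h3
    · exact absurd h3 hφ₀ne
  have hlam₀ : ∀ b : B, T b φ₀ = lam b • φ₀ := fun b => hlam b φ₀ hφ₀S
  have hlam_one : lam 1 = 1 := by
    apply hcancel
    rw [← hlam₀ 1, hTA 1 (one_mem A) φ₀ hPφ₀, one_smul]
  have hlam_mul : ∀ b₁ b₂ : B, lam (b₁ * b₂) = lam b₁ * lam b₂ := by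
    intro b₁ b₂
    apply hcancel
    rw [← hlam₀ (b₁ * b₂), ← hTmul, hlam₀ b₂, map_smul, hlam₀ b₁, mul_smul,
      smul_comm]
  have hlam_A : ∀ a ∈ A, lam a = 1 := by
    intro a ha
    apply hcancel
    rw [← hlam₀ a, hTA a ha φ₀ hPφ₀, one_smul]
  have hlam_ne : ∀ b : B, lam b ≠ 0 := by
    intro b
    have h1 : lam b * lam b⁻¹ = 1 := by
      rw [← hlam_mul, mul_inv_cancel, hlam_one]
    exact left_ne_zero_of_mul_eq_one h1
  -- the character
  set χ : B →* ℂˣ := MonoidHom.mk' (fun b => Units.mk0 (lam b) (hlam_ne b))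
    (fun b₁ b₂ => Units.ext (by simp [hlam_mul])) with hχdef
  have hχval : ∀ b : B, (χ b : ℂ) = lam b := fun b => rfl
  -- the key intertwining identity: lam b • φ₀ (π b v) = π' b (φ₀ v)
  have hint : ∀ (b : B) (v : V), lam b • φ₀ (π b v) = π' b (φ₀ v) := by
    intro b v
    have h1 := congrArg (fun ψ : V →ₗ[ℂ] V' => ψ (π b v)) (hlam₀ b)
    simp only [hTapp, LinearMap.smul_apply] at h1
    have h2 : π b⁻¹ (π b v) = v := by
      rw [← Module.End.mul_apply, ← map_mul, inv_mul_cancel, map_one,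
        Module.End.one_apply]
    rw [h2] at h1
    exact h1.symm
  -- φ₀ is bijective
  have hker : LinearMap.ker φ₀ = ⊥ := by
    have hsub : IsSubrep π (LinearMap.ker φ₀) := by
      intro b
      rintro x ⟨v, hv, rfl⟩
      have hv0 : φ₀ v = 0 := hv
      have := hint b v
      rw [hv0, map_zero] at this
      have h3 : φ₀ (π b v) = 0 := by
        have := smul_eq_zero.mp this
        rcases this with h | h
        · exact absurd h (hlam_ne b)
        · exact h
      exact h3
    rcases hirr.2 _ hsub with h | h
    · exact h
    · exfalso
      apply hφ₀ne
      ext v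
      have : v ∈ LinearMap.ker φ₀ := h ▸ Submodule.mem_top
      simpa using this
  have hrange : LinearMap.range φ₀ = ⊤ := by
    have hsub : IsSubrep π' (LinearMap.range φ₀) := by
      intro b
      rintro x ⟨y, ⟨v, rfl⟩, rfl⟩
      refine ⟨lam b • π b v, ?_⟩
      rw [map_smul, hint b v]
    rcases hirr'.2 _ hsub with h | h
    · exfalso
      apply hφ₀ne
      ext v
      have : φ₀ v ∈ LinearMap.range φ₀ := ⟨v, rfl⟩
      rw [h] at this
      simpa using this
    · exact h
  have hbij : Function.Bijective φ₀ :=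
    ⟨LinearMap.ker_eq_bot.mp hker, LinearMap.range_eq_top.mp hrange⟩
  refine ⟨χ, ?_, LinearEquiv.ofBijective φ₀ hbij, ?_⟩
  · intro a ha
    exact Units.ext (by simpa [hχval] using hlam_A a ha)
  · intro b v
    show φ₀ ((χ b : ℂ) • π b v) = π' b (φ₀ v)
    rw [map_smul, hχval, hint]
end

section
/- Let G be a locally profinite group, N ⊆ G an open normal subgroup with G/N finite abelian, σ a smooth finite-dimensional irreducible representation of N, and N ⊆ H ⊆ G a subgroup to which σ extends. Then H is maximal among subgroups of the stabilizer G_σ to which σ extends if and only if for one (equivalently any) extension σ_H of σ to H, the stabilizer of the isomorphism class of σ_H in G equals H. -/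
open Module

/-- A representation is smooth if every vector has open stabilizer. -/
def IsSmoothRep {G : Type} [Group G] [TopologicalSpace G] {V : Type} [AddCommGroup V]
    [Module ℂ V] (ρ : Representation ℂ G V) : Prop :=
  ∀ v : V, IsOpen {g : G | ρ g v = v}

/-- Conjugation stays in a normal subgroup. -/
theorem conjN_mem {G : Type} [Group G] (N : Subgroup G) [hN : N.Normal] {n : G}
    (hn : n ∈ N) (g : G) : g⁻¹ * n * g ∈ N := by
  simpa using hN.conj_mem n hn g⁻¹

/-- Any subgroup between `N` and `G` is normal when `G/N` is abelian:
conjugates of elements of `H` stay in `H`. -/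
theorem conjH_mem {G : Type} [Group G] (N H : Subgroup G) (hNH : N ≤ H)
    (hab : ∀ x y : G, x * y * x⁻¹ * y⁻¹ ∈ N) {h : G} (hh : h ∈ H) (g : G) :
    g⁻¹ * h * g ∈ H := by
  have h1 : h⁻¹ * g⁻¹ * h⁻¹⁻¹ * g⁻¹⁻¹ ∈ N := hab h⁻¹ g⁻¹
  have h2 : g⁻¹ * h * g = h * (h⁻¹ * g⁻¹ * h⁻¹⁻¹ * g⁻¹⁻¹) := by group
  rw [h2]
  exact H.mul_mem hh (hNH h1)

section MyHelpers

variable {G : Type} [Group G] {V : Type} [AddCommGroup V] [Module ℂ V]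

theorem schur_aux {σ : Representation ℂ G V} [FiniteDimensional ℂ V] (hirr : IsIrred σ)
    (f : V →ₗ[ℂ] V) (hf : ∀ g : G, ∀ v : V, f (σ g v) = σ g (f v)) :
    ∃ c : ℂ, ∀ v : V, f v = c • v := by
  obtain ⟨hnt, hW⟩ := hirr
  haveI := hnt
  obtain ⟨c, hc⟩ := Module.End.exists_eigenvalue (f : Module.End ℂ V)
  obtain ⟨v, hv1, hv2⟩ := hc.exists_hasEigenvector
  refine ⟨c, ?_⟩
  set K : Submodule ℂ V := LinearMap.ker (f - c • LinearMap.id) with hK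
  have hmem : ∀ x : V, x ∈ K ↔ f x = c • x := by
    intro x
    simp [hK, LinearMap.mem_ker, sub_eq_zero]
  have hKsub : IsSubrep σ K := by
    rintro g x ⟨y, hy, rfl⟩
    have hy' := (hmem y).1 hy
    rw [hmem, hf g y, hy', map_smul]
  have hKne : K ≠ ⊥ := by
    intro h
    have : v ∈ K := (hmem v).2 (Module.End.mem_eigenspace_iff.mp hv1)
    rw [h, Submodule.mem_bot] at this
    exact hv2 this
  have hKtop : K = ⊤ := (hW K hKsub).resolve_left hKne
  intro x
  exact (hmem x).1 (hKtop ▸ Submodule.mem_top)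

/-- A representation of a group lifted to linear automorphisms. -/
def repHom {H : Type} [Group H] (τ : Representation ℂ H V) : H →* (V ≃ₗ[ℂ] V) where
  toFun x := LinearEquiv.ofLinear (τ x) (τ x⁻¹)
    (by show τ x * τ x⁻¹ = LinearMap.id; rw [← map_mul, mul_inv_cancel, map_one]; rfl)
    (by show τ x⁻¹ * τ x = LinearMap.id; rw [← map_mul, inv_mul_cancel, map_one]; rfl)
  map_one' := by
    refine LinearEquiv.ext fun v => ?_
    show τ 1 v = v
    rw [map_one]; rfl
  map_mul' x y := by
    refine LinearEquiv.ext fun v => ?_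
    show τ (x * y) v = τ x (τ y v)
    rw [map_mul]; rfl

theorem repHom_apply {H : Type} [Group H] (τ : Representation ℂ H V) (x : H) (v : V) :
    repHom τ x v = τ x v := rfl

theorem le_mul_apply (a b : V ≃ₗ[ℂ] V) (v : V) : (a * b) v = a (b v) := rfl

theorem le_congr_arg {H : Type} [Group H] (τ : Representation ℂ H V) {x y : H}
    (h : x = y) : repHom τ x = repHom τ y := by rw [h]

end MyHelpers

section Grp

variable {G : Type} [Group G]

theorem conj_zpow_mem (N H : Subgroup G) (hNH : N ≤ H)
    (hab : ∀ x y : G, x * y * x⁻¹ * y⁻¹ ∈ N) (g : G) (k : ℤ) {x : G} (hx : x ∈ H) :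
    g ^ k * x * g ^ (-k) ∈ H := by
  have := conjH_mem N H hNH hab hx (g ^ (-k))
  rw [zpow_neg, inv_inv] at this
  rw [zpow_neg]
  exact this

theorem conj_zpow_memN (N : Subgroup G) [N.Normal] (g : G) (k : ℤ) {x : G} (hx : x ∈ N) :
    g ^ k * x * g ^ (-k) ∈ N := by
  have := conjN_mem N hx (g ^ (-k))
  rw [zpow_neg, inv_inv] at this
  rw [zpow_neg]
  exact this

theorem mem_sup_zpowers (N H : Subgroup G) (hNH : N ≤ H)
    (hab : ∀ x y : G, x * y * x⁻¹ * y⁻¹ ∈ N) (g : G) {x : G}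
    (hx : x ∈ H ⊔ Subgroup.zpowers g) : ∃ p : H × ℤ, x = ↑p.1 * g ^ p.2 := by
  let S : Subgroup G :=
    { carrier := {x | ∃ p : H × ℤ, x = ↑p.1 * g ^ p.2}
      one_mem' := ⟨⟨1, 0⟩, by simp⟩
      mul_mem' := by
        rintro a b ⟨⟨h₁, d₁⟩, rfl⟩ ⟨⟨h₂, d₂⟩, rfl⟩
        refine ⟨⟨h₁ * ⟨g ^ d₁ * ↑h₂ * g ^ (-d₁), conj_zpow_mem N H hNH hab g d₁ h₂.2⟩,
          d₁ + d₂⟩, ?_⟩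
        push_cast
        rw [zpow_add]
        group
      inv_mem' := by
        rintro a ⟨⟨h, d⟩, rfl⟩
        refine ⟨⟨⟨g ^ (-d) * (↑h)⁻¹ * g ^ (-(-d)), conj_zpow_mem N H hNH hab g (-d)
          (H.inv_mem h.2)⟩, -d⟩, ?_⟩
        push_cast
        group }
  have hle : H ⊔ Subgroup.zpowers g ≤ S := by
    refine sup_le (fun a ha => ⟨⟨⟨a, ha⟩, 0⟩, by simp⟩) ?_
    rintro a ⟨k, rfl⟩
    exact ⟨⟨1, k⟩, by simp⟩
  exact hle hx

end Grp

section Ext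

variable {G : Type} [Group G] {V : Type} [AddCommGroup V] [Module ℂ V]

theorem ext_construct (N H : Subgroup G) [N.Normal] (hNH : N ≤ H)
    (hab : ∀ x y : G, x * y * x⁻¹ * y⁻¹ ∈ N) [Finite (G ⧸ N)]
    [FiniteDimensional ℂ V]
    (σ : Representation ℂ N V) (hirr : IsIrred σ)
    (τ : Representation ℂ H V) (hτ : ∀ (n : N) (v : V), τ ⟨↑n, hNH n.2⟩ v = σ n v)
    (g : G) (e : V ≃ₗ[ℂ] V)
    (he : ∀ (h : H) (v : V),
      e (τ ⟨g⁻¹ * ↑h * g, conjH_mem N H hNH hab h.2 g⟩ v) = τ h (e v)) :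
    ∃ τ' : Representation ℂ (H ⊔ Subgroup.zpowers g : Subgroup G) V,
      ∀ (n : N) (v : V), τ' ⟨↑n, Subgroup.mem_sup_left (hNH n.2)⟩ v = σ n v := by
  classical
  set te := repHom τ with hte
  have tcong : ∀ {a b : G} (ha : a ∈ H) (hb : b ∈ H), a = b →
      te ⟨a, ha⟩ = te ⟨b, hb⟩ := by
    intro a b ha hb h
    exact congrArg te (Subtype.ext h)
  have hconj1 : ∀ {x : G}, x ∈ H → g * x * g⁻¹ ∈ H := by
    intro x hx
    have := conjH_mem N H hNH hab hx g⁻¹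
    rwa [inv_inv] at this
  -- base conjugation relation at level of automorphisms
  have B1 : ∀ (x : G) (hx : x ∈ H),
      e * te ⟨x, hx⟩ = te ⟨g * x * g⁻¹, hconj1 hx⟩ * e := by
    intro x hx
    refine LinearEquiv.ext fun v => ?_
    have h1 := he ⟨g * x * g⁻¹, hconj1 hx⟩ v
    have h2 : (⟨g⁻¹ * (g * x * g⁻¹) * g, conjH_mem N H hNH hab (hconj1 hx) g⟩ : H)
        = ⟨x, hx⟩ := Subtype.ext (by group)
    rw [h2] at h1
    exact h1
  have B2 : ∀ (x : G) (hx : x ∈ H),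
      e⁻¹ * te ⟨x, hx⟩ = te ⟨g⁻¹ * x * g, conjH_mem N H hNH hab hx g⟩ * e⁻¹ := by
    intro x hx
    have h1 := B1 (g⁻¹ * x * g) (conjH_mem N H hNH hab hx g)
    have h2 := tcong (hconj1 (conjH_mem N H hNH hab hx g)) hx
      (show g * (g⁻¹ * x * g) * g⁻¹ = x by group)
    rw [h2] at h1
    -- h1 : e * te ⟨g⁻¹xg⟩ = te ⟨x⟩ * e
    have h3 : te ⟨g⁻¹ * x * g, conjH_mem N H hNH hab hx g⟩
        = e⁻¹ * (te ⟨x, hx⟩ * e) := eq_inv_mul_iff_mul_eq.mpr h1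
    rw [h3]
    group
  -- conjugation relation for all integer powers of e
  have C : ∀ (k : ℤ) (x : G) (hx : x ∈ H),
      e ^ k * te ⟨x, hx⟩
        = te ⟨g ^ k * x * g ^ (-k), conj_zpow_mem N H hNH hab g k hx⟩ * e ^ k := by
    intro k
    induction k using Int.induction_on with
    | zero =>
      intro x hx
      simp only [zpow_zero, one_mul, mul_one]
      exact (tcong _ _ (by group)).symm
    | succ k ih =>
      intro x hx
      have step : e ^ ((k : ℤ) + 1) = e ^ (k : ℤ) * e := by
        rw [zpow_add_one]
      rw [step, mul_assoc, B1 x hx, ← mul_assoc, ih _ (hconj1 hx), mul_assoc, ← step]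
      rw [tcong (conj_zpow_mem N H hNH hab g k (hconj1 hx))
        (conj_zpow_mem N H hNH hab g (k+1) hx) (by group)]
    | pred k ih =>
      intro x hx
      have step : e ^ (-(k : ℤ) - 1) = e ^ (-(k : ℤ)) * e⁻¹ := by
        rw [zpow_sub_one]
      rw [step, mul_assoc, B2 x hx, ← mul_assoc, ih _ (conjH_mem N H hNH hab hx g),
        mul_assoc, ← step]
      rw [tcong (conj_zpow_mem N H hNH hab g (-k) (conjH_mem N H hNH hab hx g))
        (conj_zpow_mem N H hNH hab g (-k-1) hx) (by group)]
  -- the minimal positive power of g landing in H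
  have hex : ∃ k : ℕ, 0 < k ∧ g ^ (k : ℤ) ∈ H := by
    refine ⟨orderOf ((g : G) : G ⧸ N), orderOf_pos _, ?_⟩
    have h1 : ((g ^ orderOf ((g : G) : G ⧸ N) : G) : G ⧸ N) = 1 := by
      rw [QuotientGroup.mk_pow]
      exact pow_orderOf_eq_one _
    have h2 : g ^ orderOf ((g : G) : G ⧸ N) ∈ N := (QuotientGroup.eq_one_iff _).mp h1
    rw [zpow_natCast]
    exact hNH h2
  set m := Nat.find hex with hm
  obtain ⟨hm0, hmH⟩ : 0 < m ∧ g ^ (m : ℤ) ∈ H := Nat.find_spec hex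
  have hdvd : ∀ d : ℤ, g ^ d ∈ H → (m : ℤ) ∣ d := by
    intro d hd
    have hmne : (m : ℤ) ≠ 0 := by exact_mod_cast hm0.ne'
    set r := d % (m : ℤ) with hrdef
    set q := d / (m : ℤ) with hqdef
    have hr0 : 0 ≤ r := Int.emod_nonneg d hmne
    have hrm : r < (m : ℤ) := Int.emod_lt_of_pos d (by exact_mod_cast hm0)
    have hd2 : d = (m : ℤ) * q + r := (Int.mul_ediv_add_emod d (m : ℤ)).symm
    have hgr : g ^ r ∈ H := by
      have hval : g ^ r = (g ^ ((m : ℤ) * q))⁻¹ * g ^ d := by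
        rw [hd2, zpow_add]
        group
      rw [hval]
      exact H.mul_mem (H.inv_mem (by rw [zpow_mul]; exact Subgroup.zpow_mem H hmH q)) hd
    have hr : r = 0 := by
      by_contra hne
      have hrpos : 0 < r := lt_of_le_of_ne hr0 (Ne.symm hne)
      have h2 : r.toNat < m := by omega
      refine Nat.find_min hex h2 ⟨by omega, ?_⟩
      rw [Int.toNat_of_nonneg hr0]
      exact hgr
    exact ⟨q, by rw [hd2, hr, add_zero]⟩
  -- Schur: e^m differs from τ(g^m) by a scalar
  set A : V ≃ₗ[ℂ] V := te ⟨g ^ (m : ℤ), hmH⟩ with hA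
  set B : V ≃ₗ[ℂ] V := e ^ (m : ℤ) with hB
  set X : V ≃ₗ[ℂ] V := A⁻¹ * B with hX
  have hXcomm : ∀ (n : N) (v : V), X (σ n v) = σ n (X v) := by
    intro n v
    have hnH : (n : G) ∈ H := hNH n.2
    have hcH : g ^ (m : ℤ) * ↑n * g ^ (-(m : ℤ)) ∈ H :=
      conj_zpow_mem N H hNH hab g (m : ℤ) hnH
    have h1 : B * te ⟨↑n, hnH⟩ = te ⟨g ^ (m:ℤ) * ↑n * g ^ (-(m:ℤ)), hcH⟩ * B :=
      C (m : ℤ) ↑n hnH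
    have h2 : A * te ⟨↑n, hnH⟩ = te ⟨g ^ (m:ℤ) * ↑n * g ^ (-(m:ℤ)), hcH⟩ * A := by
      rw [hA, ← map_mul, ← map_mul]
      exact tcong _ _ (by group)
    have h3 : te ⟨g ^ (m:ℤ) * ↑n * g ^ (-(m:ℤ)), hcH⟩ = A * te ⟨↑n, hnH⟩ * A⁻¹ := by
      rw [h2]; group
    have h4 : X * te ⟨↑n, hnH⟩ = te ⟨↑n, hnH⟩ * X := by
      calc A⁻¹ * B * te ⟨↑n, hnH⟩ = A⁻¹ * (B * te ⟨↑n, hnH⟩) := by group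
        _ = A⁻¹ * (te ⟨g ^ (m:ℤ) * ↑n * g ^ (-(m:ℤ)), hcH⟩ * B) := by rw [h1]
        _ = A⁻¹ * (A * te ⟨↑n, hnH⟩ * A⁻¹ * B) := by rw [h3]
        _ = te ⟨↑n, hnH⟩ * (A⁻¹ * B) := by group
    have h5 : σ n v = te ⟨↑n, hnH⟩ v := (hτ n v).symm
    have h6 : ∀ w : V, σ n w = te ⟨↑n, hnH⟩ w := fun w => (hτ n w).symm
    rw [h5]
    have := congrArg (fun f : V ≃ₗ[ℂ] V => f v) h4
    simp only [le_mul_apply] at this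
    rw [this, h6 (X v)]
  obtain ⟨c, hc0⟩ := schur_aux hirr X.toLinearMap (fun n v => hXcomm n v)
  have hc : ∀ v : V, X v = c • v := hc0
  haveI : Nontrivial V := hirr.1
  obtain ⟨v₀, hv₀⟩ := exists_ne (0 : V)
  have hcne : c ≠ 0 := by
    intro h
    apply hv₀
    have := hc v₀
    rw [h, zero_smul] at this
    exact (LinearEquiv.map_eq_zero_iff X).mp this
  obtain ⟨ζ, hζ⟩ := IsAlgClosed.exists_pow_nat_eq c⁻¹ hm0
  have hζne : ζ ≠ 0 := by
    intro h
    rw [h, zero_pow hm0.ne'] at hζ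
    exact inv_ne_zero hcne hζ.symm
  -- the scaling automorphism
  set sz : V ≃ₗ[ℂ] V := DistribMulAction.toLinearEquiv ℂ V (Units.mk0 ζ hζne) with hsz
  have hszap : ∀ v : V, sz v = ζ • v := fun v => rfl
  have hszc : ∀ f : V ≃ₗ[ℂ] V, sz * f = f * sz := by
    intro f
    refine LinearEquiv.ext fun v => ?_
    rw [le_mul_apply, le_mul_apply, hszap, hszap, map_smul]
  have hcom : Commute sz e := hszc e
  set E : V ≃ₗ[ℂ] V := sz * e with hE
  have hEk : ∀ k : ℤ, E ^ k = sz ^ k * e ^ k := fun k => hcom.mul_zpow k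
  have hszkc : ∀ (k : ℤ) (f : V ≃ₗ[ℂ] V), sz ^ k * f = f * sz ^ k := by
    intro k f
    exact ((Commute.zpow_left (hszc f) k)).eq
  -- conjugation relation for E
  have CE : ∀ (k : ℤ) (x : G) (hx : x ∈ H),
      E ^ k * te ⟨x, hx⟩
        = te ⟨g ^ k * x * g ^ (-k), conj_zpow_mem N H hNH hab g k hx⟩ * E ^ k := by
    intro k x hx
    rw [hEk, mul_assoc, C k x hx, ← mul_assoc, hszkc, mul_assoc, ← hEk]
  -- E^m = τ(g^m)
  have hszpow : ∀ (j : ℕ) (v : V), (sz ^ j) v = ζ ^ j • v := by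
    intro j
    induction j with
    | zero => intro v; simp
    | succ j ih =>
      intro v
      rw [pow_succ, le_mul_apply, hszap, ih, smul_comm, pow_succ, mul_comm (ζ ^ j) ζ, mul_smul]
  have hBv : ∀ v : V, B v = c • A v := by
    intro v
    have h1 : A (X v) = B v := by
      have : (A * (A⁻¹ * B)) v = B v := by
        rw [← mul_assoc, mul_inv_cancel, one_mul]
      rw [← this]; rfl
    rw [← h1, hc v, map_smul]
  have Em : E ^ ((m : ℕ) : ℤ) = A := by
    refine LinearEquiv.ext fun v => ?_
    rw [hEk, le_mul_apply, hBv v, map_smul, zpow_natCast, hszpow, hζ, smul_smul,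
      mul_inv_cancel₀ hcne, one_smul]
  -- E^d = τ(g^d) whenever g^d lands in H
  have R : ∀ (d : ℤ) (hd : g ^ d ∈ H), E ^ d = te ⟨g ^ d, hd⟩ := by
    intro d hd
    obtain ⟨j, hj⟩ := hdvd d hd
    subst hj
    rw [zpow_mul E, Em, hA, ← map_zpow]
    refine congrArg te (Subtype.ext ?_)
    rw [SubgroupClass.coe_zpow]
    exact (zpow_mul g (m : ℤ) j).symm
  -- well-definedness of the coset decomposition
  have WD : ∀ (h₁ h₂ : H) (d₁ d₂ : ℤ), (h₁ : G) * g ^ d₁ = (h₂ : G) * g ^ d₂ →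
      te h₁ * E ^ d₁ = te h₂ * E ^ d₂ := by
    intro h₁ h₂ d₁ d₂ hequ
    have hval : g ^ (d₂ - d₁) = (h₂ : G)⁻¹ * h₁ := by
      calc g ^ (d₂ - d₁) = g ^ d₂ * (g ^ d₁)⁻¹ := by rw [zpow_sub]
        _ = (↑h₂)⁻¹ * (↑h₂ * g ^ d₂) * (g ^ d₁)⁻¹ := by group
        _ = (↑h₂)⁻¹ * (↑h₁ * g ^ d₁) * (g ^ d₁)⁻¹ := by rw [hequ]
        _ = (↑h₂)⁻¹ * ↑h₁ := by group
    have hgd : g ^ (d₂ - d₁) ∈ H := by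
      rw [hval]
      exact H.mul_mem (H.inv_mem h₂.2) h₁.2
    have h5 : (⟨g ^ (d₂ - d₁), hgd⟩ : H) = h₂⁻¹ * h₁ := Subtype.ext hval
    calc te h₁ * E ^ d₁ = te h₂ * (te (h₂⁻¹ * h₁) * E ^ d₁) := by
          rw [← mul_assoc, ← map_mul, mul_inv_cancel_left]
      _ = te h₂ * (E ^ (d₂ - d₁) * E ^ d₁) := by rw [R (d₂ - d₁) hgd, h5]
      _ = te h₂ * E ^ d₂ := by rw [← zpow_add, sub_add_cancel]
  -- decompose elements of H ⊔ ⟨g⟩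
  have hdec : ∀ x : (H ⊔ Subgroup.zpowers g : Subgroup G),
      ∃ p : H × ℤ, (x : G) = ↑p.1 * g ^ p.2 :=
    fun x => mem_sup_zpowers N H hNH hab g x.2
  choose p hp using hdec
  set F : (H ⊔ Subgroup.zpowers g : Subgroup G) → (V ≃ₗ[ℂ] V) :=
    fun x => te (p x).1 * E ^ (p x).2 with hFdef
  have hF : ∀ (x : (H ⊔ Subgroup.zpowers g : Subgroup G)) (h : H) (d : ℤ),
      (x : G) = ↑h * g ^ d → F x = te h * E ^ d := by
    intro x h d hx
    exact WD _ _ _ _ (by rw [← hp x, hx])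
  have hFmul : ∀ x y : (H ⊔ Subgroup.zpowers g : Subgroup G), F (x * y) = F x * F y := by
    intro x y
    have kx : (↑x : G) = ↑(p x).1 * g ^ (p x).2 := hp x
    have ky : (↑y : G) = ↑(p y).1 * g ^ (p y).2 := hp y
    have hcmem : g ^ (p x).2 * ↑(p y).1 * g ^ (-(p x).2) ∈ H :=
      conj_zpow_mem N H hNH hab g (p x).2 (p y).1.2
    have hxy : ((x * y : (H ⊔ Subgroup.zpowers g : Subgroup G)) : G)
        = ↑((p x).1 * ⟨g ^ (p x).2 * ↑(p y).1 * g ^ (-(p x).2), hcmem⟩)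
          * g ^ ((p x).2 + (p y).2) := by
      push_cast
      rw [kx, ky, zpow_add]
      group
    rw [hF (x * y) _ _ hxy, hF x _ _ kx, hF y _ _ ky]
    rw [map_mul, zpow_add, ← mul_assoc, mul_assoc (te (p x).1)]
    have := CE (p x).2 ↑(p y).1 (p y).1.2
    rw [← this]
    group
  refine ⟨{ toFun := fun x => (F x).toLinearMap
            map_one' := ?_
            map_mul' := ?_ }, ?_⟩
  · have h1 : F 1 = 1 := by
      rw [hF 1 1 0 (by simp)]
      simp
    show (F 1).toLinearMap = 1
    rw [h1]
    rfl
  · intro x y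
    show (F (x * y)).toLinearMap = (F x).toLinearMap * (F y).toLinearMap
    rw [hFmul]
    rfl
  · intro n v
    have h1 : F ⟨↑n, Subgroup.mem_sup_left (hNH n.2)⟩ = te ⟨↑n, hNH n.2⟩ * E ^ (0 : ℤ) :=
      hF _ _ 0 (by simp)
    show (F ⟨↑n, Subgroup.mem_sup_left (hNH n.2)⟩) v = σ n v
    rw [h1, zpow_zero, mul_one, repHom_apply, hτ]

end Ext

section Stab

variable {G : Type} [Group G] {V : Type} [AddCommGroup V] [Module ℂ V]

/-- An extension of `σ` to `H'` shows every element of `H'` stabilizes `σ`. -/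
theorem ext_stab (N : Subgroup G) [N.Normal] (H' : Subgroup G) (hNH' : N ≤ H')
    (σ : Representation ℂ N V) (τ' : Representation ℂ H' V)
    (hτ' : ∀ (n : N) (v : V), τ' ⟨↑n, hNH' n.2⟩ v = σ n v)
    {x : G} (hx : x ∈ H') :
    ∃ e : V ≃ₗ[ℂ] V, ∀ (n : N) (v : V),
      e (σ ⟨x⁻¹ * ↑n * x, conjN_mem N n.2 x⟩ v) = σ n (e v) := by
  refine ⟨repHom τ' ⟨x, hx⟩, ?_⟩
  intro n v
  rw [repHom_apply, repHom_apply]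
  have h1 : σ (⟨x⁻¹ * ↑n * x, conjN_mem N n.2 x⟩ : N) v
      = τ' ⟨x⁻¹ * ↑n * x, hNH' (conjN_mem N n.2 x)⟩ v :=
    (hτ' ⟨_, conjN_mem N n.2 x⟩ v).symm
  rw [h1]
  calc τ' ⟨x, hx⟩ (τ' ⟨x⁻¹ * ↑n * x, hNH' (conjN_mem N n.2 x)⟩ v)
      = τ' (⟨x, hx⟩ * ⟨x⁻¹ * ↑n * x, hNH' (conjN_mem N n.2 x)⟩) v := by
        rw [map_mul]; rfl
    _ = τ' (⟨↑n, hNH' n.2⟩ * ⟨x, hx⟩) v := by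
        exact congrArg (fun z => τ' z v) (Subtype.ext (by push_cast; group))
    _ = τ' ⟨↑n, hNH' n.2⟩ (τ' ⟨x, hx⟩ v) := by rw [map_mul]; rfl
    _ = σ n (τ' ⟨x, hx⟩ v) := hτ' n _

/-- Any element of `H'` stabilizes the restriction to `H` of a representation of `H'`. -/
theorem tau_stab (H H' : Subgroup G) (hHH' : H ≤ H') (τ' : Representation ℂ H' V)
    {g : G} (hg : g ∈ H') (hconj : ∀ {h : G}, h ∈ H → g⁻¹ * h * g ∈ H) :
    ∃ e : V ≃ₗ[ℂ] V, ∀ (h : H) (v : V),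
      e (τ' ⟨g⁻¹ * ↑h * g, hHH' (hconj h.2)⟩ v) = τ' ⟨↑h, hHH' h.2⟩ (e v) := by
  refine ⟨repHom τ' ⟨g, hg⟩, ?_⟩
  intro h v
  rw [repHom_apply, repHom_apply]
  calc τ' ⟨g, hg⟩ (τ' ⟨g⁻¹ * ↑h * g, hHH' (hconj h.2)⟩ v)
      = τ' (⟨g, hg⟩ * ⟨g⁻¹ * ↑h * g, hHH' (hconj h.2)⟩) v := by rw [map_mul]; rfl
    _ = τ' (⟨↑h, hHH' h.2⟩ * ⟨g, hg⟩) v := by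
        exact congrArg (fun z => τ' z v) (Subtype.ext (by push_cast; group))
    _ = τ' ⟨↑h, hHH' h.2⟩ (τ' ⟨g, hg⟩ v) := by rw [map_mul]; rfl

/-- Two extensions of an irreducible `σ` have the same stabilizer. -/
theorem transfer_stab (N H : Subgroup G) [N.Normal] (hNH : N ≤ H)
    (hab : ∀ x y : G, x * y * x⁻¹ * y⁻¹ ∈ N) [FiniteDimensional ℂ V]
    (σ : Representation ℂ N V) (hirr : IsIrred σ)
    (τ τ₀ : Representation ℂ H V)
    (hτ : ∀ (n : N) (v : V), τ ⟨↑n, hNH n.2⟩ v = σ n v)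
    (hτ₀ : ∀ (n : N) (v : V), τ₀ ⟨↑n, hNH n.2⟩ v = σ n v)
    (g : G) (e : V ≃ₗ[ℂ] V)
    (he : ∀ (h : H) (v : V),
      e (τ ⟨g⁻¹ * ↑h * g, conjH_mem N H hNH hab h.2 g⟩ v) = τ h (e v)) :
    ∀ (h : H) (v : V),
      e (τ₀ ⟨g⁻¹ * ↑h * g, conjH_mem N H hNH hab h.2 g⟩ v) = τ₀ h (e v) := by
  haveI : Nontrivial V := hirr.1
  have key : ∀ h : H, ∃ c : ℂ, ∀ v : V, τ₀ h v = c • τ h v := by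
    intro h
    set X : V ≃ₗ[ℂ] V := repHom τ₀ h * (repHom τ h)⁻¹ with hX
    have hXcomm : ∀ (n : N) (v : V), X (σ n v) = σ n (X v) := by
      intro n v
      have hn' : ((h : G))⁻¹ * (n : G) * (h : G) ∈ N := conjN_mem N n.2 (h : G)
      set n' : N := ⟨((h : G))⁻¹ * (n : G) * (h : G), hn'⟩ with hn'def
      have r1 : (repHom τ h)⁻¹ * repHom τ ⟨↑n, hNH n.2⟩
          = repHom τ ⟨↑n', hNH n'.2⟩ * (repHom τ h)⁻¹ := by
        rw [← map_inv, ← map_mul, ← map_mul]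
        exact congrArg (repHom τ) (Subtype.ext (by simp only [hn'def]; push_cast; group))
      have r2 : repHom τ₀ h * repHom τ₀ ⟨↑n', hNH n'.2⟩
          = repHom τ₀ ⟨↑n, hNH n.2⟩ * repHom τ₀ h := by
        rw [← map_mul, ← map_mul]
        exact congrArg (repHom τ₀) (Subtype.ext (by simp only [hn'def]; push_cast; group))
      have s1 : σ n v = repHom τ ⟨↑n, hNH n.2⟩ v := (hτ n v).symm
      have s2 : ∀ w : V, repHom τ ⟨↑n', hNH n'.2⟩ w = repHom τ₀ ⟨↑n', hNH n'.2⟩ w := by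
        intro w
        rw [repHom_apply, repHom_apply, hτ n' w, ← hτ₀ n' w]
      have s3 : ∀ w : V, repHom τ₀ ⟨↑n, hNH n.2⟩ w = σ n w := fun w => hτ₀ n w
      have c1 := congrArg (fun f : V ≃ₗ[ℂ] V => f v) r1
      simp only [le_mul_apply] at c1
      have c2 := congrArg (fun f : V ≃ₗ[ℂ] V => f ((repHom τ h)⁻¹ v)) r2
      simp only [le_mul_apply] at c2
      show repHom τ₀ h ((repHom τ h)⁻¹ (σ n v)) = σ n (repHom τ₀ h ((repHom τ h)⁻¹ v))
      rw [s1, c1, s2, c2, s3]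
    obtain ⟨c, hc0⟩ := schur_aux hirr X.toLinearMap (fun n v => hXcomm n v)
    have hc : ∀ v : V, X v = c • v := hc0
    refine ⟨c, fun v => ?_⟩
    have h1 : X (repHom τ h v) = c • repHom τ h v := hc _
    have h2 : X (repHom τ h v) = repHom τ₀ h v := by
      show (repHom τ₀ h * (repHom τ h)⁻¹) (repHom τ h v) = _
      rw [le_mul_apply]
      congr 1
      have : ((repHom τ h)⁻¹ * repHom τ h) v = v := by rw [inv_mul_cancel]; rfl
      exact this
    show repHom τ₀ h v = c • repHom τ h v
    rw [← h2, h1]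
  choose cf hcf using key
  have hcinv : ∀ h : H, cf ⟨g⁻¹ * ↑h * g, conjH_mem N H hNH hab h.2 g⟩ = cf h := by
    intro h
    set h' : H := ⟨g⁻¹ * ↑h * g, conjH_mem N H hNH hab h.2 g⟩ with hh'
    have hn₀ : g⁻¹ * ↑h * g * (↑h)⁻¹ ∈ N := by
      have := hab g⁻¹ ↑h
      rwa [inv_inv] at this
    set n₀ : N := ⟨g⁻¹ * ↑h * g * (↑h)⁻¹, hn₀⟩ with hn₀def
    have hsplit : h' = ⟨↑n₀, hNH n₀.2⟩ * h := Subtype.ext (by simp only [hh', hn₀def]; push_cast; group)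
    obtain ⟨v₀, hv₀⟩ := exists_ne (0 : V)
    set v : V := (repHom τ h')⁻¹ v₀ with hv
    have hτv : τ h' v = v₀ := by
      have : (repHom τ h' * (repHom τ h')⁻¹) v₀ = v₀ := by rw [mul_inv_cancel]; rfl
      rw [le_mul_apply] at this
      rw [← repHom_apply τ h']
      exact this
    have e1 : τ₀ h' v = cf h • τ h' v := by
      rw [hsplit, map_mul, map_mul, Module.End.mul_apply, Module.End.mul_apply,
        hτ₀ n₀ (τ₀ h v), hcf h v, map_smul, ← hτ n₀ (τ h v)]
    have e2 : τ₀ h' v = cf h' • τ h' v := hcf h' v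
    have : cf h' • v₀ = cf h • v₀ := by rw [← hτv, ← e2, e1]
    exact smul_left_injective ℂ hv₀ this
  intro h v
  rw [hcf ⟨g⁻¹ * ↑h * g, conjH_mem N H hNH hab h.2 g⟩ v, hcinv h, map_smul,
    he h v, hcf h (e v)]

end Stab

/-- Let `G` be locally profinite, `N ⊆ G` open normal with `G/N` finite abelian, `σ` a
smooth finite-dimensional irreducible representation of `N`, and `N ⊆ H ⊆ G` a subgroup
to which `σ` extends.  Then `H` is maximal among subgroups of the stabilizer `G_σ` to
which `σ` extends if and only if for one (equivalently, any) extension `σ_H` of `σ`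
to `H`, the stabilizer of the isomorphism class of `σ_H` equals `H`. -/
theorem maximal_extension_iff_selfstabilizing
    {G : Type} [Group G] [TopologicalSpace G] [IsTopologicalGroup G]
    [LocallyCompactSpace G] [TotallyDisconnectedSpace G]
    (N : Subgroup G) [N.Normal] (hNopen : IsOpen (N : Set G))
    [Finite (G ⧸ N)] (habQuot : ∀ x y : G, x * y * x⁻¹ * y⁻¹ ∈ N)
    {V : Type} [AddCommGroup V] [Module ℂ V] [FiniteDimensional ℂ V]
    (σ : Representation ℂ N V) (hsm : IsSmoothRep σ) (hirr : IsIrred σ)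
    (H : Subgroup G) (hNH : N ≤ H)
    (hext : ∃ τ : Representation ℂ H V,
      ∀ (n : N) (v : V), τ ⟨↑n, hNH n.2⟩ v = σ n v) :
    -- maximality of H among subgroups of G_σ to which σ extends:
    (((∀ h ∈ H, ∃ e : V ≃ₗ[ℂ] V, ∀ (n : N) (v : V),
          e (σ ⟨h⁻¹ * ↑n * h, conjN_mem N n.2 h⟩ v) = σ n (e v)) ∧
      ∀ H' : Subgroup G, ∀ hHH' : H ≤ H',
        (∀ h ∈ H', ∃ e : V ≃ₗ[ℂ] V, ∀ (n : N) (v : V),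
          e (σ ⟨h⁻¹ * ↑n * h, conjN_mem N n.2 h⟩ v) = σ n (e v)) →
        (∃ τ' : Representation ℂ H' V,
          ∀ (n : N) (v : V), τ' ⟨↑n, (hNH.trans hHH') n.2⟩ v = σ n v) →
        H' = H) ↔
      -- ... iff any extension σ_H has stabilizer exactly H:
      (∀ τ : Representation ℂ H V,
        (∀ (n : N) (v : V), τ ⟨↑n, hNH n.2⟩ v = σ n v) →
        ∀ g : G,
          (∃ e : V ≃ₗ[ℂ] V, ∀ (h : H) (v : V),
            e (τ ⟨g⁻¹ * ↑h * g, conjH_mem N H hNH habQuot h.2 g⟩ v) = τ h (e v)) ↔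
          g ∈ H)) ∧
    -- ... iff some extension σ_H has stabilizer exactly H:
    (((∀ h ∈ H, ∃ e : V ≃ₗ[ℂ] V, ∀ (n : N) (v : V),
          e (σ ⟨h⁻¹ * ↑n * h, conjN_mem N n.2 h⟩ v) = σ n (e v)) ∧
      ∀ H' : Subgroup G, ∀ hHH' : H ≤ H',
        (∀ h ∈ H', ∃ e : V ≃ₗ[ℂ] V, ∀ (n : N) (v : V),
          e (σ ⟨h⁻¹ * ↑n * h, conjN_mem N n.2 h⟩ v) = σ n (e v)) →
        (∃ τ' : Representation ℂ H' V,
          ∀ (n : N) (v : V), τ' ⟨↑n, (hNH.trans hHH') n.2⟩ v = σ n v) →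
        H' = H) ↔
      (∃ τ : Representation ℂ H V,
        (∀ (n : N) (v : V), τ ⟨↑n, hNH n.2⟩ v = σ n v) ∧
        ∀ g : G,
          (∃ e : V ≃ₗ[ℂ] V, ∀ (h : H) (v : V),
            e (τ ⟨g⁻¹ * ↑h * g, conjH_mem N H hNH habQuot h.2 g⟩ v) = τ h (e v)) ↔
          g ∈ H)) := by
  classical
  obtain ⟨τ₀, hτ₀⟩ := hext
  -- maximality implies every extension is self-stabilizing
  have main1 : ((∀ h ∈ H, ∃ e : V ≃ₗ[ℂ] V, ∀ (n : N) (v : V),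
          e (σ ⟨h⁻¹ * ↑n * h, conjN_mem N n.2 h⟩ v) = σ n (e v)) ∧
      ∀ H' : Subgroup G, ∀ hHH' : H ≤ H',
        (∀ h ∈ H', ∃ e : V ≃ₗ[ℂ] V, ∀ (n : N) (v : V),
          e (σ ⟨h⁻¹ * ↑n * h, conjN_mem N n.2 h⟩ v) = σ n (e v)) →
        (∃ τ' : Representation ℂ H' V,
          ∀ (n : N) (v : V), τ' ⟨↑n, (hNH.trans hHH') n.2⟩ v = σ n v) →
        H' = H) →
      (∀ τ : Representation ℂ H V,
        (∀ (n : N) (v : V), τ ⟨↑n, hNH n.2⟩ v = σ n v) →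
        ∀ g : G,
          (∃ e : V ≃ₗ[ℂ] V, ∀ (h : H) (v : V),
            e (τ ⟨g⁻¹ * ↑h * g, conjH_mem N H hNH habQuot h.2 g⟩ v) = τ h (e v)) ↔
          g ∈ H) := by
    rintro ⟨hA1, hA2⟩ τ hτ g
    constructor
    · rintro ⟨e, he⟩
      obtain ⟨τ'', hτ''⟩ := ext_construct N H hNH habQuot σ hirr τ hτ g e he
      have hsub : ∀ h ∈ (H ⊔ Subgroup.zpowers g : Subgroup G), ∃ e : V ≃ₗ[ℂ] V,
          ∀ (n : N) (v : V), e (σ ⟨h⁻¹ * ↑n * h, conjN_mem N n.2 h⟩ v) = σ n (e v) := by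
        intro x hx
        exact ext_stab N _ (hNH.trans le_sup_left) σ τ'' (fun n v => hτ'' n v) hx
      have hHeq : (H ⊔ Subgroup.zpowers g : Subgroup G) = H :=
        hA2 _ le_sup_left hsub ⟨τ'', fun n v => hτ'' n v⟩
      have hg : g ∈ (H ⊔ Subgroup.zpowers g : Subgroup G) :=
        Subgroup.mem_sup_right (Subgroup.mem_zpowers g)
      rwa [hHeq] at hg
    · intro hg
      obtain ⟨e, he⟩ := tau_stab H H le_rfl τ hg
        (fun hh => conjH_mem N H hNH habQuot hh g)
      exact ⟨e, fun h v => he h v⟩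
  -- a self-stabilizing extension implies maximality
  have main2 : (∃ τ : Representation ℂ H V,
        (∀ (n : N) (v : V), τ ⟨↑n, hNH n.2⟩ v = σ n v) ∧
        ∀ g : G,
          (∃ e : V ≃ₗ[ℂ] V, ∀ (h : H) (v : V),
            e (τ ⟨g⁻¹ * ↑h * g, conjH_mem N H hNH habQuot h.2 g⟩ v) = τ h (e v)) ↔
          g ∈ H) →
      ((∀ h ∈ H, ∃ e : V ≃ₗ[ℂ] V, ∀ (n : N) (v : V),
          e (σ ⟨h⁻¹ * ↑n * h, conjN_mem N n.2 h⟩ v) = σ n (e v)) ∧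
      ∀ H' : Subgroup G, ∀ hHH' : H ≤ H',
        (∀ h ∈ H', ∃ e : V ≃ₗ[ℂ] V, ∀ (n : N) (v : V),
          e (σ ⟨h⁻¹ * ↑n * h, conjN_mem N n.2 h⟩ v) = σ n (e v)) →
        (∃ τ' : Representation ℂ H' V,
          ∀ (n : N) (v : V), τ' ⟨↑n, (hNH.trans hHH') n.2⟩ v = σ n v) →
        H' = H) := by
    rintro ⟨τ₁, hτ₁, hB⟩
    constructor
    · intro x hx
      exact ext_stab N H hNH σ τ₁ hτ₁ hx
    · rintro H' hHH' hstab' ⟨τ', hτ'⟩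
      refine le_antisymm ?_ hHH'
      intro x hx
      set τr : Representation ℂ H V := τ'.comp (Subgroup.inclusion hHH') with hτr
      have hτrext : ∀ (n : N) (v : V), τr ⟨↑n, hNH n.2⟩ v = σ n v := by
        intro n v
        exact hτ' n v
      obtain ⟨e, he⟩ := tau_stab H H' hHH' τ' hx
        (fun hh => conjH_mem N H hNH habQuot hh x)
      have he' : ∀ (h : H) (v : V),
          e (τr ⟨x⁻¹ * ↑h * x, conjH_mem N H hNH habQuot h.2 x⟩ v) = τr h (e v) :=
        fun h v => he h v
      have htrans := transfer_stab N H hNH habQuot σ hirr τr τ₁ hτrext hτ₁ x e he'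
      exact (hB x).mp ⟨e, htrans⟩
  constructor
  · constructor
    · exact main1
    · intro hall
      exact main2 ⟨τ₀, hτ₀, hall τ₀ hτ₀⟩
  · constructor
    · intro hA
      exact ⟨τ₀, hτ₀, main1 hA τ₀ hτ₀⟩
    · exact main2
end

section
/- Let G be a locally profinite group, N ⊆ G an open normal subgroup with G/N finite abelian, and σ, σ′ smooth finite-dimensional irreducible representations of N. Then Ind_N^G σ and Ind_N^G σ′ are either disjoint (share no irreducible constituent) or isomorphic, and they are isomorphic if and only if σ′ ≅ σ∘Ad(g) for some g ∈ G. -/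
open Module

section IndDefs

variable {G : Type} [Group G] {V : Type} [AddCommGroup V] [Module ℂ V]

/-- The carrier of the induced representation `Ind_N^G σ`:
functions `f : G → V` with `f(ng) = σ(n) f(g)`. -/
def indCarrier (N : Subgroup G) (σ : Representation ℂ N V) : Submodule ℂ (G → V) where
  carrier := {f | ∀ (h : N) (g : G), f (↑h * g) = σ h (f g)}
  add_mem' := by
    intro f₁ f₂ h₁ h₂ h g
    simp only [Pi.add_apply, map_add, h₁ h g, h₂ h g]
  zero_mem' := by intro h g; simp
  smul_mem' := by
    intro c f hf h g
    simp only [Pi.smul_apply, map_smul, hf h g]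

/-- The induced representation `Ind_N^G σ`, with `G` acting by right translation. -/
def indRep (N : Subgroup G) (σ : Representation ℂ N V) :
    Representation ℂ G (indCarrier N σ) where
  toFun g :=
    { toFun := fun f => ⟨fun x => (f : G → V) (x * g), fun h x => by
        have := f.2 h (x * g); simpa [mul_assoc] using this⟩
      map_add' := by intro f₁ f₂; ext x; simp
      map_smul' := by intro c f; ext x; simp }
  map_one' := by ext f x; simp
  map_mul' g₁ g₂ := by ext f x; simp [mul_assoc]

end IndDefs

section AuxProof

open scoped Classical

variable {G : Type} [Group G] {V V' : Type} [AddCommGroup V] [Module ℂ V]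
  [AddCommGroup V'] [Module ℂ V']

/-- Evaluation at a point, as a linear map. -/
def evalAt (N : Subgroup G) (σ : Representation ℂ N V) (x : G) :
    indCarrier N σ →ₗ[ℂ] V where
  toFun f := f.1 x
  map_add' := fun _ _ => rfl
  map_smul' := fun _ _ => rfl

/-- Extension by zero from the coset `N g₁`. -/
noncomputable def indExt (N : Subgroup G) [N.Normal] (σ : Representation ℂ N V) (g₁ : G) :
    V →ₗ[ℂ] indCarrier N σ where
  toFun v := ⟨fun x => if h : x * g₁⁻¹ ∈ N then σ ⟨x * g₁⁻¹, h⟩ v else 0, by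
    intro h x
    dsimp only
    by_cases hx : x * g₁⁻¹ ∈ N
    · have hx' : (↑h * x) * g₁⁻¹ ∈ N := by
        rw [mul_assoc]; exact mul_mem h.2 hx
      rw [dif_pos hx', dif_pos hx]
      have he : (⟨↑h * x * g₁⁻¹, hx'⟩ : N) = h * ⟨x * g₁⁻¹, hx⟩ := by
        ext; simp [mul_assoc]
      rw [he, map_mul]; rfl
    · have hx' : ¬ ((↑h * x) * g₁⁻¹ ∈ N) := by
        rw [mul_assoc]
        intro hc
        exact hx ((mul_mem_cancel_left h.2).mp hc)
      rw [dif_neg hx', dif_neg hx, map_zero]⟩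
  map_add' := by
    intro v w
    apply Subtype.ext; funext x
    by_cases hx : x * g₁⁻¹ ∈ N <;> simp [hx]
  map_smul' := by
    intro c v
    apply Subtype.ext; funext x
    by_cases hx : x * g₁⁻¹ ∈ N <;> simp [hx]

theorem indExt_apply (N : Subgroup G) [N.Normal] (σ : Representation ℂ N V) (g₁ : G)
    (v : V) (x : G) :
    (indExt N σ g₁ v).1 x = if h : x * g₁⁻¹ ∈ N then σ ⟨x * g₁⁻¹, h⟩ v else 0 := rfl

theorem indExt_conj (N : Subgroup G) [N.Normal] (σ : Representation ℂ N V) (g₁ : G)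
    (m : N) (v : V) :
    indExt N σ g₁ (σ m v) = indRep N σ (g₁⁻¹ * ↑m * g₁) (indExt N σ g₁ v) := by
  apply Subtype.ext; funext x
  show _ = (indExt N σ g₁ v).1 (x * (g₁⁻¹ * ↑m * g₁))
  rw [indExt_apply, indExt_apply]
  have hcond : x * (g₁⁻¹ * ↑m * g₁) * g₁⁻¹ = (x * g₁⁻¹) * ↑m := by group
  by_cases hx : x * g₁⁻¹ ∈ N
  · have hx' : x * (g₁⁻¹ * ↑m * g₁) * g₁⁻¹ ∈ N := by
      rw [hcond]; exact mul_mem hx m.2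
    rw [dif_pos hx, dif_pos hx']
    have he : (⟨x * (g₁⁻¹ * ↑m * g₁) * g₁⁻¹, hx'⟩ : N) = ⟨x * g₁⁻¹, hx⟩ * m := by
      ext; simp [hcond]
    rw [he, map_mul]; rfl
  · have hx' : ¬ (x * (g₁⁻¹ * ↑m * g₁) * g₁⁻¹ ∈ N) := by
      rw [hcond]
      intro hc
      exact hx ((mul_mem_cancel_right m.2).mp hc)
    rw [dif_neg hx, dif_neg hx']

/-- Restriction to a coset, as a linear endomorphism of the induced space. -/
noncomputable def restCoset (N : Subgroup G) [N.Normal] (σ : Representation ℂ N V) (c : G ⧸ N) :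
    indCarrier N σ →ₗ[ℂ] indCarrier N σ where
  toFun f := ⟨fun x => if (QuotientGroup.mk x : G ⧸ N) = c then f.1 x else 0, by
    intro h x
    have hq : (QuotientGroup.mk (↑h * x) : G ⧸ N) = QuotientGroup.mk x := by
      rw [QuotientGroup.eq]
      simpa using conjN_mem N (inv_mem h.2) x
    dsimp only
    rw [hq]
    by_cases hx : (QuotientGroup.mk x : G ⧸ N) = c
    · rw [if_pos hx, if_pos hx, f.2 h x]
    · rw [if_neg hx, if_neg hx, map_zero]⟩
  map_add' := by
    intro v w
    apply Subtype.ext; funext x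
    by_cases hx : (QuotientGroup.mk x : G ⧸ N) = c <;> simp [hx]
  map_smul' := by
    intro c' v
    apply Subtype.ext; funext x
    by_cases hx : (QuotientGroup.mk x : G ⧸ N) = c <;> simp [hx]

theorem sum_restCoset (N : Subgroup G) [N.Normal] [Fintype (G ⧸ N)]
    (σ : Representation ℂ N V) (f : indCarrier N σ) :
    ∑ c : G ⧸ N, restCoset N σ c f = f := by
  apply Subtype.ext; funext x
  have h1 : (↑(∑ c : G ⧸ N, restCoset N σ c f) : G → V) x
      = ∑ c : G ⧸ N, (restCoset N σ c f).1 x :=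
    map_sum (evalAt N σ x) (fun c => restCoset N σ c f) Finset.univ

  rw [h1]
  show (∑ c : G ⧸ N, if (QuotientGroup.mk x : G ⧸ N) = c then f.1 x else 0) = f.1 x
  simp

theorem restCoset_eq_indExt (N : Subgroup G) [N.Normal] (σ : Representation ℂ N V)
    (g₁ : G) (f : indCarrier N σ) :
    restCoset N σ (QuotientGroup.mk g₁) f = indExt N σ g₁ (f.1 g₁) := by
  apply Subtype.ext; funext x
  show (if (QuotientGroup.mk x : G ⧸ N) = QuotientGroup.mk g₁ then f.1 x else 0) = _
  rw [indExt_apply]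
  have hiff : (QuotientGroup.mk x : G ⧸ N) = QuotientGroup.mk g₁ ↔ x * g₁⁻¹ ∈ N := by
    rw [QuotientGroup.eq]
    constructor
    · intro h
      simpa [mul_assoc] using conjN_mem N (inv_mem h) x⁻¹
    · intro h
      simpa [mul_assoc] using conjN_mem N (inv_mem h) x
  by_cases hx : x * g₁⁻¹ ∈ N
  · rw [if_pos (hiff.mpr hx), dif_pos hx]
    have := f.2 ⟨x * g₁⁻¹, hx⟩ g₁
    simpa using this
  · rw [if_neg (fun hc => hx (hiff.mp hc)), dif_neg hx]

/-- The conjugate representation `n ↦ σ(g⁻¹ n g)`. -/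
def conjRep (N : Subgroup G) [N.Normal] (σ : Representation ℂ N V) (g : G) :
    Representation ℂ N V where
  toFun n := σ ⟨g⁻¹ * ↑n * g, conjN_mem N n.2 g⟩
  map_one' := by
    have he : (⟨g⁻¹ * ↑(1 : N) * g, conjN_mem N (1 : N).2 g⟩ : N) = 1 := by
      ext; simp
    show σ ⟨g⁻¹ * ↑(1 : N) * g, conjN_mem N (1 : N).2 g⟩ = 1
    rw [he, map_one]
  map_mul' n m := by
    have he : (⟨g⁻¹ * ↑(n * m) * g, conjN_mem N (n * m).2 g⟩ : N)
        = ⟨g⁻¹ * ↑n * g, conjN_mem N n.2 g⟩ * ⟨g⁻¹ * ↑m * g, conjN_mem N m.2 g⟩ := by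
      ext; push_cast; group
    show σ ⟨g⁻¹ * ↑(n * m) * g, conjN_mem N (n * m).2 g⟩ = _
    rw [he, map_mul]

theorem isIrred_conjRep (N : Subgroup G) [N.Normal] (σ : Representation ℂ N V)
    (g : G) (h : IsIrred σ) : IsIrred (conjRep N σ g) := by
  refine ⟨h.1, fun W hW => h.2 W ?_⟩
  intro n
  have hmem : g⁻¹⁻¹ * ↑n * g⁻¹ ∈ N := conjN_mem N n.2 g⁻¹
  have := hW ⟨g⁻¹⁻¹ * ↑n * g⁻¹, hmem⟩
  have he : conjRep N σ g ⟨g⁻¹⁻¹ * ↑n * g⁻¹, hmem⟩ = σ n := by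
    show σ _ = σ n
    congr 1
    ext; simp; group
  rwa [he] at this

/-- Schur: a nonzero equivariant map between irreducibles is bijective. -/
theorem bijective_of_equivariant_ne_zero {N : Subgroup G}
    (σ : Representation ℂ N V) (σ' : Representation ℂ N V')
    (hirr : IsIrred σ) (hirr' : IsIrred σ') (B : V →ₗ[ℂ] V') (hB : B ≠ 0)
    (h : ∀ (n : N) (v : V), B (σ n v) = σ' n (B v)) : Function.Bijective B := by
  constructor
  · rw [← LinearMap.ker_eq_bot]
    have hsub : IsSubrep σ (LinearMap.ker B) := by
      rintro n w ⟨v, hv, rfl⟩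
      simp only [LinearMap.mem_ker] at hv ⊢
      rw [h n v, hv, map_zero]
    rcases hirr.2 _ hsub with h0 | h1
    · exact h0
    · exfalso; apply hB
      ext v
      have : v ∈ LinearMap.ker B := h1 ▸ Submodule.mem_top
      simpa using this
  · rw [← LinearMap.range_eq_top]
    have hsub : IsSubrep σ' (LinearMap.range B) := by
      rintro n w ⟨w', ⟨v, rfl⟩, rfl⟩
      exact ⟨σ n v, h n v⟩
    rcases hirr'.2 _ hsub with h0 | h1
    · exfalso; apply hB
      ext v
      have : B v ∈ LinearMap.range B := LinearMap.mem_range_self B v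
      rw [h0] at this
      simpa using this
    · exact h1

/-- From a nonzero equivariant map between induced representations, produce a
conjugation intertwiner. -/
theorem hom_gives_conj (N : Subgroup G) [N.Normal] [Finite (G ⧸ N)]
    (σ : Representation ℂ N V) (σ' : Representation ℂ N V')
    (hirr : IsIrred σ) (hirr' : IsIrred σ')
    (φ : indCarrier N σ →ₗ[ℂ] indCarrier N σ') (hφ : φ ≠ 0)
    (heq : ∀ (g : G) (f : indCarrier N σ), φ (indRep N σ g f) = indRep N σ' g (φ f)) :
    ∃ g : G, ∃ e : V' ≃ₗ[ℂ] V,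
      ∀ (n : N) (v : V'),
        e (σ' n v) = σ ⟨g⁻¹ * ↑n * g, conjN_mem N n.2 g⟩ (e v) := by
  classical
  have := Fintype.ofFinite (G ⧸ N)
  -- find f with φ f ≠ 0
  obtain ⟨f, hf⟩ : ∃ f, φ f ≠ 0 := by
    by_contra hc
    push_neg at hc
    exact hφ (LinearMap.ext fun f => hc f)
  obtain ⟨g₀, hg₀⟩ : ∃ g₀ : G, (φ f).1 g₀ ≠ 0 := by
    by_contra hc
    push_neg at hc
    exact hf (Subtype.ext (funext hc))
  -- find a coset on which the composite is nonzero
  have hsum : ∑ c : G ⧸ N, (φ (restCoset N σ c f)).1 g₀ = (φ f).1 g₀ := by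
    have h1 : ∑ c : G ⧸ N, (φ (restCoset N σ c f)).1 g₀
        = (evalAt N σ' g₀) (φ (∑ c : G ⧸ N, restCoset N σ c f)) := by
      rw [map_sum, map_sum]; rfl
    rw [h1, sum_restCoset]
    rfl
  obtain ⟨c, _, hc⟩ := Finset.exists_ne_zero_of_sum_ne_zero (hsum ▸ hg₀)
  set g₁ := Quotient.out c with hg₁def
  have hout : (QuotientGroup.mk g₁ : G ⧸ N) = c := QuotientGroup.out_eq' c
  -- build B : V → V'
  set B : V →ₗ[ℂ] V' := (evalAt N σ' g₀) ∘ₗ φ ∘ₗ indExt N σ g₁ with hBdef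
  have hBne : B ≠ 0 := by
    intro hc0
    apply hc
    have : restCoset N σ c f = indExt N σ g₁ (f.1 g₁) := by
      rw [← hout, restCoset_eq_indExt]
    rw [this]
    have : B (f.1 g₁) = 0 := by rw [hc0]; rfl
    exact this
  set k : G := g₀ * g₁⁻¹ with hkdef
  have hBint : ∀ (n : N) (v : V), B (conjRep N σ k n v) = σ' n (B v) := by
    intro n v
    have hmemm : k⁻¹ * ↑n * k ∈ N := conjN_mem N n.2 k
    set m : N := ⟨k⁻¹ * ↑n * k, hmemm⟩ with hmdef
    show (φ (indExt N σ g₁ (σ m v))).1 g₀ = σ' n ((φ (indExt N σ g₁ v)).1 g₀)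
    rw [indExt_conj, heq]
    show (φ (indExt N σ g₁ v)).1 (g₀ * (g₁⁻¹ * ↑m * g₁)) = _
    have hkey : g₀ * (g₁⁻¹ * ↑m * g₁) = ↑n * g₀ := by
      show g₀ * (g₁⁻¹ * ((g₀ * g₁⁻¹)⁻¹ * ↑n * (g₀ * g₁⁻¹)) * g₁) = ↑n * g₀
      group
    rw [hkey]
    exact (φ (indExt N σ g₁ v)).2 n g₀
  have hbij := bijective_of_equivariant_ne_zero (conjRep N σ k) σ'
    (isIrred_conjRep N σ k hirr) hirr' B hBne hBint
  refine ⟨k, (LinearEquiv.ofBijective B hbij).symm, ?_⟩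
  intro n v
  set E := LinearEquiv.ofBijective B hbij with hEdef
  apply E.injective
  rw [E.apply_symm_apply]
  have h2 : E ((σ ⟨k⁻¹ * ↑n * k, conjN_mem N n.2 k⟩) (E.symm v))
      = σ' n (E (E.symm v)) := hBint n (E.symm v)
  rw [h2, E.apply_symm_apply]

/-- Conjugation intertwiner gives an isomorphism of induced representations. -/
theorem conj_gives_iso (N : Subgroup G) [N.Normal]
    (σ : Representation ℂ N V) (σ' : Representation ℂ N V')
    (g : G) (e : V' ≃ₗ[ℂ] V)
    (he : ∀ (n : N) (v : V'),
      e (σ' n v) = σ ⟨g⁻¹ * ↑n * g, conjN_mem N n.2 g⟩ (e v)) :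
    ∃ E : indCarrier N σ ≃ₗ[ℂ] indCarrier N σ',
      ∀ (h : G) (f : indCarrier N σ), E (indRep N σ h f) = indRep N σ' h (E f) := by
  have he' : ∀ (n : N) (w : V),
      e.symm (σ ⟨g⁻¹ * ↑n * g, conjN_mem N n.2 g⟩ w) = σ' n (e.symm w) := by
    intro n w
    apply e.injective
    rw [e.apply_symm_apply, he n (e.symm w), e.apply_symm_apply]
  let Φ : indCarrier N σ →ₗ[ℂ] indCarrier N σ' :=
    { toFun := fun f => ⟨fun x => e.symm (f.1 (g⁻¹ * x)), by
        intro n x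
        have hx : g⁻¹ * (↑n * x) = ↑(⟨g⁻¹ * ↑n * g, conjN_mem N n.2 g⟩ : N) * (g⁻¹ * x) := by
          show g⁻¹ * (↑n * x) = (g⁻¹ * ↑n * g) * (g⁻¹ * x); group
        show e.symm (f.1 (g⁻¹ * (↑n * x))) = σ' n (e.symm (f.1 (g⁻¹ * x)))
        rw [hx, f.2 ⟨g⁻¹ * ↑n * g, conjN_mem N n.2 g⟩ (g⁻¹ * x), he']⟩
      map_add' := by
        intro f₁ f₂
        apply Subtype.ext; funext x
        show e.symm ((f₁.1 + f₂.1) (g⁻¹ * x)) = _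
        simp
      map_smul' := by
        intro c f
        apply Subtype.ext; funext x
        show e.symm ((c • f.1) (g⁻¹ * x)) = _
        simp }
  let Ψ : indCarrier N σ' →ₗ[ℂ] indCarrier N σ :=
    { toFun := fun F => ⟨fun x => e (F.1 (g * x)), by
        intro n x
        have hmem : g * ↑n * g⁻¹ ∈ N := by simpa using conjN_mem N n.2 g⁻¹
        have hx : g * (↑n * x) = ↑(⟨g * ↑n * g⁻¹, hmem⟩ : N) * (g * x) := by
          show g * (↑n * x) = (g * ↑n * g⁻¹) * (g * x); group
        show e (F.1 (g * (↑n * x))) = σ n (e (F.1 (g * x)))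
        rw [hx, F.2 ⟨g * ↑n * g⁻¹, hmem⟩ (g * x)]
        rw [he ⟨g * ↑n * g⁻¹, hmem⟩ (F.1 (g * x))]
        have harg : (⟨g⁻¹ * ↑(⟨g * ↑n * g⁻¹, hmem⟩ : N) * g,
            conjN_mem N (⟨g * ↑n * g⁻¹, hmem⟩ : N).2 g⟩ : N) = n := by
          ext
          show g⁻¹ * (g * ↑n * g⁻¹) * g = ↑n
          group
        rw [harg]⟩
      map_add' := by
        intro f₁ f₂
        apply Subtype.ext; funext x
        show e ((f₁.1 + f₂.1) (g * x)) = _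
        simp
      map_smul' := by
        intro c f
        apply Subtype.ext; funext x
        show e ((c • f.1) (g * x)) = _
        simp }
  have hΦΨ : Φ.comp Ψ = LinearMap.id := by
    apply LinearMap.ext; intro F
    apply Subtype.ext; funext x
    show e.symm (e (F.1 (g * (g⁻¹ * x)))) = F.1 x
    rw [e.symm_apply_apply]
    congr 1; group
  have hΨΦ : Ψ.comp Φ = LinearMap.id := by
    apply LinearMap.ext; intro f
    apply Subtype.ext; funext x
    show e (e.symm (f.1 (g⁻¹ * (g * x)))) = f.1 x
    rw [e.apply_symm_apply]
    congr 1; group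
  refine ⟨LinearEquiv.ofLinear Φ Ψ hΦΨ hΨΦ, ?_⟩
  intro h f
  apply Subtype.ext; funext x
  show e.symm (f.1 ((g⁻¹ * x) * h)) = e.symm (f.1 (g⁻¹ * (x * h)))
  congr 2; group

/-- The induced space is nontrivial when `V` is. -/
theorem indCarrier_nontrivial (N : Subgroup G) [N.Normal]
    (σ : Representation ℂ N V) (hnt : Nontrivial V) :
    ∃ f : indCarrier N σ, f ≠ 0 := by
  obtain ⟨v, hv⟩ := exists_ne (0 : V)
  refine ⟨indExt N σ 1 v, fun hc => hv ?_⟩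
  have h1 : (indExt N σ 1 v).1 1 = v := by
    rw [indExt_apply]
    have hm : (1 : G) * (1 : G)⁻¹ ∈ N := by simpa using one_mem N
    rw [dif_pos hm]
    have : (⟨(1 : G) * (1 : G)⁻¹, hm⟩ : N) = 1 := by ext; simp
    rw [this, map_one]; rfl
  rw [hc] at h1
  exact h1.symm

end AuxProof

/-- Let `G` be locally profinite, `N ⊆ G` an open normal subgroup with `G/N` finite
abelian, and `σ, σ′` smooth finite-dimensional irreducible representations of `N`.
Then `Ind_N^G σ` and `Ind_N^G σ′` are either disjoint or isomorphic, and they are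
isomorphic if and only if `σ′ ≅ σ ∘ Ad(g)` for some `g ∈ G`. -/
theorem ind_disjoint_or_iso_and_iso_iff_conjugate
    {G : Type} [Group G] [TopologicalSpace G] [IsTopologicalGroup G]
    [LocallyCompactSpace G] [TotallyDisconnectedSpace G]
    (N : Subgroup G) [N.Normal] (hNopen : IsOpen (N : Set G))
    [Finite (G ⧸ N)] (habQuot : ∀ x y : G, x * y * x⁻¹ * y⁻¹ ∈ N)
    {V V' : Type} [AddCommGroup V] [Module ℂ V] [FiniteDimensional ℂ V]
    [AddCommGroup V'] [Module ℂ V'] [FiniteDimensional ℂ V']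
    (σ : Representation ℂ N V) (σ' : Representation ℂ N V')
    (hsm : IsSmoothRep σ) (hsm' : IsSmoothRep σ')
    (hirr : IsIrred σ) (hirr' : IsIrred σ') :
    -- not disjoint implies isomorphic
    ((∃ φ : indCarrier N σ →ₗ[ℂ] indCarrier N σ', φ ≠ 0 ∧
        ∀ (g : G) (f : indCarrier N σ), φ (indRep N σ g f) = indRep N σ' g (φ f)) →
      (∃ e : indCarrier N σ ≃ₗ[ℂ] indCarrier N σ',
        ∀ (g : G) (f : indCarrier N σ), e (indRep N σ g f) = indRep N σ' g (e f))) ∧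
    -- isomorphic iff conjugate
    ((∃ e : indCarrier N σ ≃ₗ[ℂ] indCarrier N σ',
        ∀ (g : G) (f : indCarrier N σ), e (indRep N σ g f) = indRep N σ' g (e f)) ↔
      (∃ g : G, ∃ e : V' ≃ₗ[ℂ] V,
        ∀ (n : N) (v : V'),
          e (σ' n v) = σ ⟨g⁻¹ * ↑n * g, conjN_mem N n.2 g⟩ (e v))) := by
  classical
  have main : (∃ φ : indCarrier N σ →ₗ[ℂ] indCarrier N σ', φ ≠ 0 ∧
      ∀ (g : G) (f : indCarrier N σ), φ (indRep N σ g f) = indRep N σ' g (φ f)) →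
      (∃ g : G, ∃ e : V' ≃ₗ[ℂ] V,
        ∀ (n : N) (v : V'),
          e (σ' n v) = σ ⟨g⁻¹ * ↑n * g, conjN_mem N n.2 g⟩ (e v)) := by
    rintro ⟨φ, hφ, heq⟩
    exact hom_gives_conj N σ σ' hirr hirr' φ hφ heq
  have build : (∃ g : G, ∃ e : V' ≃ₗ[ℂ] V,
      ∀ (n : N) (v : V'),
        e (σ' n v) = σ ⟨g⁻¹ * ↑n * g, conjN_mem N n.2 g⟩ (e v)) →
      (∃ e : indCarrier N σ ≃ₗ[ℂ] indCarrier N σ',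
        ∀ (g : G) (f : indCarrier N σ), e (indRep N σ g f) = indRep N σ' g (e f)) := by
    rintro ⟨g, e, he⟩
    exact conj_gives_iso N σ σ' g e he
  have isoToHom : (∃ e : indCarrier N σ ≃ₗ[ℂ] indCarrier N σ',
      ∀ (g : G) (f : indCarrier N σ), e (indRep N σ g f) = indRep N σ' g (e f)) →
      (∃ φ : indCarrier N σ →ₗ[ℂ] indCarrier N σ', φ ≠ 0 ∧
        ∀ (g : G) (f : indCarrier N σ), φ (indRep N σ g f) = indRep N σ' g (φ f)) := by
    rintro ⟨e, he⟩
    refine ⟨e.toLinearMap, ?_, he⟩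
    obtain ⟨f₀, hf₀⟩ := indCarrier_nontrivial N σ hirr.1
    intro hc
    apply hf₀
    apply e.injective
    have : e.toLinearMap f₀ = 0 := by rw [hc]; rfl
    simpa using this
  exact ⟨fun h => build (main h), ⟨fun h => main (isoToHom h), build⟩⟩
end
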